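/- Let σ > 0 and let φ:[0,1]×[0,1]→[0,1] be C², with ∂_sφ(t,s) > 0 for all (t,s), φ(t,0) = 0 and φ(t,1) = 1 for all t. Let τ:[0,1]×[0,1]→ℝ be C¹, and define ξ(t,s) = (cos τ(t,s), sin τ(t,s)), η = τ/(2σ), and q(t,s) = √(∂_sφ(t,s))·(cos η(t,s), sin η(t,s)) ∈ ℝ². Then (i) ∫₀¹ |q(t,s)|² ds = 1 for every t, and (ii) ∫₀¹∫₀¹ (∂_t∂_sφ)²/∂_sφ ds dt + σ⁻² ∫₀¹∫₀¹ |∂_tξ|² ∂_sφ ds dt = 4 ∫₀¹∫₀¹ |∂_t q(t,s)|² ds dt. -/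

import Mathlib

open MeasureTheory Set

/-- Let `σ > 0`, `φ : [0,1]² → [0,1]` be `C²` with `∂_sφ > 0`, `φ(t,0) = 0`,
`φ(t,1) = 1`. Let `τ : [0,1]² → ℝ` be `C¹` and define `ξ = (cos τ, sin τ)`, `η = τ/(2σ)`,
`q(t,s) = √(∂_sφ(t,s))·(cos η, sin η) ∈ ℝ²`. Then (i) `∫₀¹ |q(t,s)|² ds = 1` for every `t`, and
(ii) `∫₀¹∫₀¹ (∂_t∂_sφ)²/∂_sφ ds dt + σ⁻² ∫₀¹∫₀¹ |∂_tξ|² ∂_sφ ds dt = 4∫₀¹∫₀¹ |∂_tq|² ds dt`. -/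
theorem stmt5 (σ : ℝ) (hσ : 0 < σ)
    (φ φs φts τ τt : ℝ → ℝ → ℝ)
    (hφC2 : ContDiffOn ℝ 2 (fun x : ℝ × ℝ => φ x.1 x.2) (Set.Icc 0 1 ×ˢ Set.Icc 0 1))
    (hφrange : ∀ t ∈ Set.Icc (0:ℝ) 1, ∀ s ∈ Set.Icc (0:ℝ) 1, φ t s ∈ Set.Icc (0:ℝ) 1)
    (hφs : ∀ t ∈ Set.Icc (0:ℝ) 1, ∀ s ∈ Set.Icc (0:ℝ) 1,
        HasDerivWithinAt (fun s' => φ t s') (φs t s) (Set.Icc 0 1) s)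
    (hφts : ∀ t ∈ Set.Icc (0:ℝ) 1, ∀ s ∈ Set.Icc (0:ℝ) 1,
        HasDerivWithinAt (fun t' => φs t' s) (φts t s) (Set.Icc 0 1) t)
    (hτC1 : ContDiffOn ℝ 1 (fun x : ℝ × ℝ => τ x.1 x.2) (Set.Icc 0 1 ×ˢ Set.Icc 0 1))
    (hτt : ∀ t ∈ Set.Icc (0:ℝ) 1, ∀ s ∈ Set.Icc (0:ℝ) 1,
        HasDerivWithinAt (fun t' => τ t' s) (τt t s) (Set.Icc 0 1) t)
    (hφspos : ∀ t ∈ Set.Icc (0:ℝ) 1, ∀ s ∈ Set.Icc (0:ℝ) 1, 0 < φs t s)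
    (hφ0 : ∀ t ∈ Set.Icc (0:ℝ) 1, φ t 0 = 0)
    (hφ1 : ∀ t ∈ Set.Icc (0:ℝ) 1, φ t 1 = 1)
    (η q1 q2 ξ1 ξ2 q1t q2t ξ1t ξ2t : ℝ → ℝ → ℝ)
    (hη : ∀ t s, η t s = τ t s / (2 * σ))
    (hq1 : ∀ t s, q1 t s = Real.sqrt (φs t s) * Real.cos (η t s))
    (hq2 : ∀ t s, q2 t s = Real.sqrt (φs t s) * Real.sin (η t s))
    (hξ1 : ∀ t s, ξ1 t s = Real.cos (τ t s))
    (hξ2 : ∀ t s, ξ2 t s = Real.sin (τ t s))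
    (hq1t : ∀ t ∈ Set.Icc (0:ℝ) 1, ∀ s ∈ Set.Icc (0:ℝ) 1,
        HasDerivWithinAt (fun t' => q1 t' s) (q1t t s) (Set.Icc 0 1) t)
    (hq2t : ∀ t ∈ Set.Icc (0:ℝ) 1, ∀ s ∈ Set.Icc (0:ℝ) 1,
        HasDerivWithinAt (fun t' => q2 t' s) (q2t t s) (Set.Icc 0 1) t)
    (hξ1t : ∀ t ∈ Set.Icc (0:ℝ) 1, ∀ s ∈ Set.Icc (0:ℝ) 1,
        HasDerivWithinAt (fun t' => ξ1 t' s) (ξ1t t s) (Set.Icc 0 1) t)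
    (hξ2t : ∀ t ∈ Set.Icc (0:ℝ) 1, ∀ s ∈ Set.Icc (0:ℝ) 1,
        HasDerivWithinAt (fun t' => ξ2 t' s) (ξ2t t s) (Set.Icc 0 1) t) :
    (∀ t ∈ Set.Icc (0:ℝ) 1, (∫ s in (0:ℝ)..1, ((q1 t s) ^ 2 + (q2 t s) ^ 2)) = 1) ∧
    ((∫ t in (0:ℝ)..1, ∫ s in (0:ℝ)..1, (φts t s) ^ 2 / φs t s)
        + (σ ^ 2)⁻¹ * ∫ t in (0:ℝ)..1, ∫ s in (0:ℝ)..1, ((ξ1t t s) ^ 2 + (ξ2t t s) ^ 2) * φs t s)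
      = 4 * ∫ t in (0:ℝ)..1, ∫ s in (0:ℝ)..1, ((q1t t s) ^ 2 + (q2t t s) ^ 2) := by
  have hI : UniqueDiffOn ℝ (Icc (0:ℝ) 1) := uniqueDiffOn_Icc zero_lt_one
  set S : Set (ℝ × ℝ) := Icc 0 1 ×ˢ Icc 0 1 with hSdef
  have hS : UniqueDiffOn ℝ S := hI.prod hI
  have huIcc : uIcc (0:ℝ) 1 = Icc 0 1 := uIcc_of_le zero_le_one
  -- uniqueness of within-derivatives on Icc
  have uniq : ∀ {f : ℝ → ℝ} {a b x : ℝ}, x ∈ Icc (0:ℝ) 1 →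
      HasDerivWithinAt f a (Icc 0 1) x → HasDerivWithinAt f b (Icc 0 1) x → a = b := by
    intro f a b x hx h1 h2
    rw [← h1.derivWithin (hI x hx), ← h2.derivWithin (hI x hx)]
  set Φ : ℝ × ℝ → ℝ := fun x => φ x.1 x.2 with hΦdef
  set T : ℝ × ℝ → ℝ := fun x => τ x.1 x.2 with hTdef
  set Φs : ℝ × ℝ → ℝ := fun x => fderivWithin ℝ Φ S x (0, 1) with hΦsdef
  have hΦsC1 : ContDiffOn ℝ 1 Φs S :=
    (hφC2.fderivWithin hS (by norm_num)).clm_apply contDiffOn_const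
  set Φts : ℝ × ℝ → ℝ := fun x => fderivWithin ℝ Φs S x (1, 0) with hΦtsdef
  have hΦtscont : ContinuousOn Φts S :=
    (hΦsC1.continuousOn_fderivWithin hS le_rfl).clm_apply continuousOn_const
  set Tt : ℝ × ℝ → ℝ := fun x => fderivWithin ℝ T S x (1, 0) with hTtdef
  have hTtcont : ContinuousOn Tt S :=
    (hτC1.continuousOn_fderivWithin hS le_rfl).clm_apply continuousOn_const
  -- s-slice derivative of Φ
  have hslice_s : ∀ t ∈ Icc (0:ℝ) 1, ∀ s ∈ Icc (0:ℝ) 1,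
      HasDerivWithinAt (fun s' => φ t s') (Φs (t, s)) (Icc 0 1) s := by
    intro t ht s hs
    have hdiff : HasFDerivWithinAt Φ (fderivWithin ℝ Φ S (t, s)) S (t, s) :=
      ((hφC2.differentiableOn (by norm_num)) (t, s) (mk_mem_prod ht hs)).hasFDerivWithinAt
    have hg : HasDerivWithinAt (fun s' : ℝ => ((t : ℝ), s')) ((0 : ℝ), (1 : ℝ)) (Icc 0 1) s :=
      ((hasDerivAt_const s t).prodMk (hasDerivAt_id s)).hasDerivWithinAt
    exact hdiff.comp_hasDerivWithinAt s hg (fun s' hs' => mk_mem_prod ht hs')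
  have hφsΦs : ∀ t ∈ Icc (0:ℝ) 1, ∀ s ∈ Icc (0:ℝ) 1, φs t s = Φs (t, s) := by
    intro t ht s hs
    exact uniq hs (hφs t ht s hs) (hslice_s t ht s hs)
  -- t-slice derivative of Φs
  have hslice_t : ∀ t ∈ Icc (0:ℝ) 1, ∀ s ∈ Icc (0:ℝ) 1,
      HasDerivWithinAt (fun t' => Φs (t', s)) (Φts (t, s)) (Icc 0 1) t := by
    intro t ht s hs
    have hdiff : HasFDerivWithinAt Φs (fderivWithin ℝ Φs S (t, s)) S (t, s) :=
      ((hΦsC1.differentiableOn one_ne_zero) (t, s) (mk_mem_prod ht hs)).hasFDerivWithinAt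
    have hg : HasDerivWithinAt (fun t' : ℝ => (t', s)) ((1 : ℝ), (0 : ℝ)) (Icc 0 1) t :=
      ((hasDerivAt_id t).prodMk (hasDerivAt_const t s)).hasDerivWithinAt
    exact hdiff.comp_hasDerivWithinAt t hg (fun t' ht' => mk_mem_prod ht' hs)
  have hφtsΦts : ∀ t ∈ Icc (0:ℝ) 1, ∀ s ∈ Icc (0:ℝ) 1, φts t s = Φts (t, s) := by
    intro t ht s hs
    have h1 : HasDerivWithinAt (fun t' => Φs (t', s)) (φts t s) (Icc 0 1) t :=
      (hφts t ht s hs).congr (fun y hy => (hφsΦs y hy s hs).symm) (hφsΦs t ht s hs).symm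
    exact uniq ht h1 (hslice_t t ht s hs)
  -- t-slice derivative of T
  have hslice_τ : ∀ t ∈ Icc (0:ℝ) 1, ∀ s ∈ Icc (0:ℝ) 1,
      HasDerivWithinAt (fun t' => τ t' s) (Tt (t, s)) (Icc 0 1) t := by
    intro t ht s hs
    have hdiff : HasFDerivWithinAt T (fderivWithin ℝ T S (t, s)) S (t, s) :=
      ((hτC1.differentiableOn one_ne_zero) (t, s) (mk_mem_prod ht hs)).hasFDerivWithinAt
    have hg : HasDerivWithinAt (fun t' : ℝ => (t', s)) ((1 : ℝ), (0 : ℝ)) (Icc 0 1) t :=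
      ((hasDerivAt_id t).prodMk (hasDerivAt_const t s)).hasDerivWithinAt
    exact hdiff.comp_hasDerivWithinAt t hg (fun t' ht' => mk_mem_prod ht' hs)
  have hτtTt : ∀ t ∈ Icc (0:ℝ) 1, ∀ s ∈ Icc (0:ℝ) 1, τt t s = Tt (t, s) := by
    intro t ht s hs
    exact uniq ht (hτt t ht s hs) (hslice_τ t ht s hs)
  -- closed forms of the given derivatives
  have hξ1t' : ∀ t ∈ Icc (0:ℝ) 1, ∀ s ∈ Icc (0:ℝ) 1,
      ξ1t t s = -Real.sin (τ t s) * τt t s := by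
    intro t ht s hs
    have h1 : HasDerivWithinAt (fun t' => ξ1 t' s) (-Real.sin (τ t s) * τt t s) (Icc 0 1) t := by
      have := (hτt t ht s hs).cos
      exact this.congr (fun y _ => hξ1 y s) (hξ1 t s)
    exact uniq ht (hξ1t t ht s hs) h1
  have hξ2t' : ∀ t ∈ Icc (0:ℝ) 1, ∀ s ∈ Icc (0:ℝ) 1,
      ξ2t t s = Real.cos (τ t s) * τt t s := by
    intro t ht s hs
    have h1 : HasDerivWithinAt (fun t' => ξ2 t' s) (Real.cos (τ t s) * τt t s) (Icc 0 1) t := by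
      have := (hτt t ht s hs).sin
      exact this.congr (fun y _ => hξ2 y s) (hξ2 t s)
    exact uniq ht (hξ2t t ht s hs) h1
  have hq1t' : ∀ t ∈ Icc (0:ℝ) 1, ∀ s ∈ Icc (0:ℝ) 1,
      q1t t s = φts t s / (2 * Real.sqrt (φs t s)) * Real.cos (η t s)
        + Real.sqrt (φs t s) * (-Real.sin (η t s) * (τt t s / (2 * σ))) := by
    intro t ht s hs
    have hA : HasDerivWithinAt (fun t' => Real.sqrt (φs t' s))
        (φts t s / (2 * Real.sqrt (φs t s))) (Icc 0 1) t :=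
      (hφts t ht s hs).sqrt (hφspos t ht s hs).ne'
    have hB : HasDerivWithinAt (fun t' => Real.cos (τ t' s / (2 * σ)))
        (-Real.sin (τ t s / (2 * σ)) * (τt t s / (2 * σ))) (Icc 0 1) t :=
      ((hτt t ht s hs).div_const (2 * σ)).cos
    have h1 := hA.mul hB
    have h2 : HasDerivWithinAt (fun t' => q1 t' s)
        (φts t s / (2 * Real.sqrt (φs t s)) * Real.cos (τ t s / (2 * σ))
          + Real.sqrt (φs t s) * (-Real.sin (τ t s / (2 * σ)) * (τt t s / (2 * σ))))
        (Icc 0 1) t :=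
      h1.congr (fun y _ => by rw [hq1, hη]; rfl) (by rw [hq1, hη]; rfl)
    rw [hη]
    exact uniq ht (hq1t t ht s hs) h2
  have hq2t' : ∀ t ∈ Icc (0:ℝ) 1, ∀ s ∈ Icc (0:ℝ) 1,
      q2t t s = φts t s / (2 * Real.sqrt (φs t s)) * Real.sin (η t s)
        + Real.sqrt (φs t s) * (Real.cos (η t s) * (τt t s / (2 * σ))) := by
    intro t ht s hs
    have hA : HasDerivWithinAt (fun t' => Real.sqrt (φs t' s))
        (φts t s / (2 * Real.sqrt (φs t s))) (Icc 0 1) t :=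
      (hφts t ht s hs).sqrt (hφspos t ht s hs).ne'
    have hB : HasDerivWithinAt (fun t' => Real.sin (τ t' s / (2 * σ)))
        (Real.cos (τ t s / (2 * σ)) * (τt t s / (2 * σ))) (Icc 0 1) t :=
      ((hτt t ht s hs).div_const (2 * σ)).sin
    have h1 := hA.mul hB
    have h2 : HasDerivWithinAt (fun t' => q2 t' s)
        (φts t s / (2 * Real.sqrt (φs t s)) * Real.sin (τ t s / (2 * σ))
          + Real.sqrt (φs t s) * (Real.cos (τ t s / (2 * σ)) * (τt t s / (2 * σ))))
        (Icc 0 1) t :=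
      h1.congr (fun y _ => by rw [hq2, hη]; rfl) (by rw [hq2, hη]; rfl)
    rw [hη]
    exact uniq ht (hq2t t ht s hs) h2
  -- pointwise key identity
  have key : ∀ t ∈ Icc (0:ℝ) 1, ∀ s ∈ Icc (0:ℝ) 1,
      (φts t s) ^ 2 / φs t s + (σ ^ 2)⁻¹ * (((ξ1t t s) ^ 2 + (ξ2t t s) ^ 2) * φs t s)
        = 4 * ((q1t t s) ^ 2 + (q2t t s) ^ 2) := by
    intro t ht s hs
    rw [hq1t' t ht s hs, hq2t' t ht s hs, hξ1t' t ht s hs, hξ2t' t ht s hs]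
    have hpos := hφspos t ht s hs
    have hr : Real.sqrt (φs t s) ^ 2 = φs t s := Real.sq_sqrt hpos.le
    have hrpos : 0 < Real.sqrt (φs t s) := Real.sqrt_pos.2 hpos
    set r := Real.sqrt (φs t s)
    set c := Real.cos (η t s)
    set si := Real.sin (η t s)
    have hcs : si ^ 2 + c ^ 2 = 1 := Real.sin_sq_add_cos_sq _
    have hcs2 : Real.sin (τ t s) ^ 2 + Real.cos (τ t s) ^ 2 = 1 := Real.sin_sq_add_cos_sq _
    rw [← hr]
    linear_combination (-((φts t s) ^ 2 / r ^ 2 + (τt t s) ^ 2 * r ^ 2 / σ ^ 2)) * hcs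
      + ((τt t s) ^ 2 * r ^ 2 / σ ^ 2) * hcs2
  -- clamping
  set pr : ℝ → ℝ := fun y => max 0 (min 1 y) with hprdef
  have hprcont : Continuous pr := continuous_const.max (continuous_const.min continuous_id)
  have hprmem : ∀ y, pr y ∈ Icc (0:ℝ) 1 :=
    fun y => ⟨le_max_left _ _, max_le zero_le_one (min_le_left _ _)⟩
  have hprid : ∀ y ∈ Icc (0:ℝ) 1, pr y = y := by
    intro y hy
    simp only [hprdef]
    rw [min_eq_right hy.2, max_eq_right hy.1]
  set cl : ℝ × ℝ → ℝ × ℝ := fun x => (pr x.1, pr x.2) with hcldef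
  have hclcont : Continuous cl := (hprcont.comp continuous_fst).prodMk (hprcont.comp continuous_snd)
  have hclmem : ∀ x, cl x ∈ S := fun x => mk_mem_prod (hprmem x.1) (hprmem x.2)
  have hclid : ∀ x ∈ S, cl x = x := by
    intro x hx
    simp only [hcldef]
    rw [hprid x.1 hx.1, hprid x.2 hx.2]
  set Fs : ℝ × ℝ → ℝ := Φs ∘ cl with hFsdef
  have hFscont : Continuous Fs := hΦsC1.continuousOn.comp_continuous hclcont hclmem
  set Fts : ℝ × ℝ → ℝ := Φts ∘ cl with hFtsdef
  have hFtscont : Continuous Fts := hΦtscont.comp_continuous hclcont hclmem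
  set Gt : ℝ × ℝ → ℝ := Tt ∘ cl with hGtdef
  have hGtcont : Continuous Gt := hTtcont.comp_continuous hclcont hclmem
  have hFspos : ∀ x, 0 < Fs x := by
    intro x
    have h := hclmem x
    rw [hFsdef]
    simp only [Function.comp_apply]
    rw [← hφsΦs (cl x).1 h.1 (cl x).2 h.2]
    exact hφspos _ h.1 _ h.2
  have hFseq : ∀ t ∈ Icc (0:ℝ) 1, ∀ s ∈ Icc (0:ℝ) 1, φs t s = Fs (t, s) := by
    intro t ht s hs
    rw [hFsdef]
    simp only [Function.comp_apply, hclid (t, s) (mk_mem_prod ht hs)]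
    exact hφsΦs t ht s hs
  have hFtseq : ∀ t ∈ Icc (0:ℝ) 1, ∀ s ∈ Icc (0:ℝ) 1, φts t s = Fts (t, s) := by
    intro t ht s hs
    rw [hFtsdef]
    simp only [Function.comp_apply, hclid (t, s) (mk_mem_prod ht hs)]
    exact hφtsΦts t ht s hs
  have hGteq : ∀ t ∈ Icc (0:ℝ) 1, ∀ s ∈ Icc (0:ℝ) 1, τt t s = Gt (t, s) := by
    intro t ht s hs
    rw [hGtdef]
    simp only [Function.comp_apply, hclid (t, s) (mk_mem_prod ht hs)]
    exact hτtTt t ht s hs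
  -- interval integrability transfer
  have intcongr : ∀ {f g : ℝ → ℝ}, (∀ x ∈ Icc (0:ℝ) 1, f x = g x) →
      IntervalIntegrable g volume 0 1 → IntervalIntegrable f volume 0 1 := by
    intro f g h hg
    rw [intervalIntegrable_iff_integrableOn_Ioc_of_le zero_le_one] at *
    exact hg.congr_fun (fun x hx => (h x (Ioc_subset_Icc_self hx)).symm) measurableSet_Ioc
  -- Part (i)
  have part1 : ∀ t ∈ Icc (0:ℝ) 1, (∫ s in (0:ℝ)..1, ((q1 t s) ^ 2 + (q2 t s) ^ 2)) = 1 := by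
    intro t ht
    have hcg : (∫ s in (0:ℝ)..1, ((q1 t s) ^ 2 + (q2 t s) ^ 2)) = ∫ s in (0:ℝ)..1, φs t s := by
      apply intervalIntegral.integral_congr
      intro s hs
      rw [huIcc] at hs
      have hpos := hφspos t ht s hs
      show q1 t s ^ 2 + q2 t s ^ 2 = φs t s
      rw [hq1, hq2]
      rw [mul_pow, mul_pow, Real.sq_sqrt hpos.le, ← mul_add, Real.cos_sq_add_sin_sq, mul_one]
    rw [hcg]
    have hFTC : (∫ s in (0:ℝ)..1, φs t s) = φ t 1 - φ t 0 := by
      apply intervalIntegral.integral_eq_sub_of_hasDeriv_right_of_le zero_le_one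
      · intro s hs
        exact (hφs t ht s hs).continuousWithinAt
      · intro s hs
        have hmem : s ∈ Icc (0:ℝ) 1 := Ioo_subset_Icc_self hs
        exact ((hφs t ht s hmem).hasDerivAt (Icc_mem_nhds hs.1 hs.2)).hasDerivWithinAt
      · apply intcongr (fun s hs => hFseq t ht s hs)
        exact (hFscont.comp (continuous_const.prodMk continuous_id)).continuousOn.intervalIntegrable
    rw [hFTC, hφ1 t ht, hφ0 t ht]
    norm_num
  refine ⟨part1, ?_⟩
  -- Part (ii): inner integrals
  have inner : ∀ t ∈ Icc (0:ℝ) 1,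
      (∫ s in (0:ℝ)..1, (φts t s) ^ 2 / φs t s)
        + (σ ^ 2)⁻¹ * (∫ s in (0:ℝ)..1, ((ξ1t t s) ^ 2 + (ξ2t t s) ^ 2) * φs t s)
      = 4 * ∫ s in (0:ℝ)..1, ((q1t t s) ^ 2 + (q2t t s) ^ 2) := by
    intro t ht
    have hfint : IntervalIntegrable (fun s => (φts t s) ^ 2 / φs t s) volume 0 1 := by
      apply intcongr (g := fun s => (Fts (t, s)) ^ 2 / Fs (t, s))
        (fun s hs => by rw [hFtseq t ht s hs, hFseq t ht s hs])
      apply ContinuousOn.intervalIntegrable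
      apply ContinuousOn.div
      · exact ((hFtscont.comp (continuous_const.prodMk continuous_id)).pow 2).continuousOn
      · exact (hFscont.comp (continuous_const.prodMk continuous_id)).continuousOn
      · intro s _
        exact (hFspos (t, s)).ne'
    have hgint : IntervalIntegrable (fun s => ((ξ1t t s) ^ 2 + (ξ2t t s) ^ 2) * φs t s)
        volume 0 1 := by
      apply intcongr (g := fun s => (Gt (t, s)) ^ 2 * Fs (t, s)) ?_ ?_
      · intro s hs
        rw [hξ1t' t ht s hs, hξ2t' t ht s hs, hGteq t ht s hs, hFseq t ht s hs]
        have hcs2 : Real.sin (τ t s) ^ 2 + Real.cos (τ t s) ^ 2 = 1 := Real.sin_sq_add_cos_sq _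
        linear_combination (Gt (t, s) ^ 2 * Fs (t, s)) * hcs2
      · apply ContinuousOn.intervalIntegrable
        exact (((hGtcont.comp (continuous_const.prodMk continuous_id)).pow 2).mul
          (hFscont.comp (continuous_const.prodMk continuous_id))).continuousOn
    rw [← intervalIntegral.integral_const_mul]
    rw [← intervalIntegral.integral_add hfint (hgint.const_mul _)]
    rw [← intervalIntegral.integral_const_mul]
    apply intervalIntegral.integral_congr
    intro s hs
    rw [huIcc] at hs
    exact key t ht s hs
  -- outer integrals
  have hFout : IntervalIntegrable (fun t => ∫ s in (0:ℝ)..1, (φts t s) ^ 2 / φs t s)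
      volume 0 1 := by
    apply intcongr (g := fun t => ∫ s in (0:ℝ)..1, (Fts (t, s)) ^ 2 / Fs (t, s)) ?_ ?_
    · intro t ht
      apply intervalIntegral.integral_congr
      intro s hs
      rw [huIcc] at hs
      show (φts t s) ^ 2 / φs t s = (Fts (t, s)) ^ 2 / Fs (t, s)
      rw [hFtseq t ht s hs, hFseq t ht s hs]
    · apply ContinuousOn.intervalIntegrable
      apply Continuous.continuousOn
      apply intervalIntegral.continuous_parametric_intervalIntegral_of_continuous'
        (f := fun t s => (Fts (t, s)) ^ 2 / Fs (t, s))
      exact ((hFtscont.pow 2).div hFscont (fun x => (hFspos x).ne'))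
  have hGout : IntervalIntegrable
      (fun t => ∫ s in (0:ℝ)..1, ((ξ1t t s) ^ 2 + (ξ2t t s) ^ 2) * φs t s) volume 0 1 := by
    apply intcongr (g := fun t => ∫ s in (0:ℝ)..1, (Gt (t, s)) ^ 2 * Fs (t, s)) ?_ ?_
    · intro t ht
      apply intervalIntegral.integral_congr
      intro s hs
      rw [huIcc] at hs
      show ((ξ1t t s) ^ 2 + (ξ2t t s) ^ 2) * φs t s = (Gt (t, s)) ^ 2 * Fs (t, s)
      rw [hξ1t' t ht s hs, hξ2t' t ht s hs, hGteq t ht s hs, hFseq t ht s hs]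
      have hcs2 : Real.sin (τ t s) ^ 2 + Real.cos (τ t s) ^ 2 = 1 := Real.sin_sq_add_cos_sq _
      linear_combination (Gt (t, s) ^ 2 * Fs (t, s)) * hcs2
    · apply ContinuousOn.intervalIntegrable
      apply Continuous.continuousOn
      apply intervalIntegral.continuous_parametric_intervalIntegral_of_continuous'
        (f := fun t s => (Gt (t, s)) ^ 2 * Fs (t, s))
      exact (hGtcont.pow 2).mul hFscont
  rw [← intervalIntegral.integral_const_mul]
  rw [← intervalIntegral.integral_add hFout (hGout.const_mul _)]
  rw [← intervalIntegral.integral_const_mul]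
  apply intervalIntegral.integral_congr
  intro t ht
  rw [huIcc] at ht
  exact inner t ht
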